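/- Let ω be a C¹ one-form on E := EuclideanSpace ℝ (Fin m) which is closed, i.e. ((fderiv ℝ ω y) u) v = ((fderiv ℝ ω y) v) u for all y, u, v ∈ E. Let γ₀, γ₁ : ℝ → E be C¹ paths with γ₀ 0 = γ₁ 0 and γ₀ 1 = γ₁ 1. Then ∫ t in (0,1), ω (γ₀ t) (deriv γ₀ t) = ∫ t in (0,1), ω (γ₁ t) (deriv γ₁ t). (This is the fact, used to define the Ismagilov–Losik–Michor cocycle, that the integral of the closed one-form g^*λ − λ depends only on the endpoints of the path.) -/

import Mathlib

open MeasureTheory intervalIntegral Metric ContinuousLinearMap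

set_option maxHeartbeats 1000000

variable {m : ℕ}

local notation "E" => EuclideanSpace ℝ (Fin m)

private theorem poincare (ω : E → (E →L[ℝ] ℝ)) (hω : ContDiff ℝ 1 ω)
    (hclosed : ∀ y u v : E, ((fderiv ℝ ω y) u) v = ((fderiv ℝ ω y) v) u) (x₀ : E) :
    HasFDerivAt (fun x : E => ∫ t in (0:ℝ)..1, ω (t • x) x) (ω x₀) x₀ := by
  have hωd : Differentiable ℝ ω := hω.differentiable one_ne_zero
  have hfc : Continuous (fderiv ℝ ω) := hω.continuous_fderiv one_ne_zero
  set F' : E → ℝ → (E →L[ℝ] ℝ) := fun x t =>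
    ω (t • x) + t • ((fderiv ℝ ω (t • x)).flip x) with hF'
  -- differentiability in x
  have h_diff : ∀ t : ℝ, ∀ x : E, HasFDerivAt (fun x : E => ω (t • x) x) (F' x t) x := by
    intro t x
    have hsm : HasFDerivAt (fun y : E => t • y) (t • ContinuousLinearMap.id ℝ E) x :=
      (hasFDerivAt_id x).const_smul t
    have hc : HasFDerivAt (fun y : E => ω (t • y))
        ((fderiv ℝ ω (t • x)).comp (t • ContinuousLinearMap.id ℝ E)) x :=
      ((hωd (t • x)).hasFDerivAt).comp x hsm
    have := hc.clm_apply (hasFDerivAt_id x)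
    refine this.congr_fderiv ?_
    ext v
    simp [hF', ContinuousLinearMap.flip_apply, mul_comm]
  -- bound
  obtain ⟨C₁, hC₁⟩ : ∃ C, ∀ y ∈ closedBall (0:E) (‖x₀‖ + 1), ‖ω y‖ ≤ C :=
    (isCompact_closedBall _ _).exists_bound_of_continuousOn hω.continuous.continuousOn
  obtain ⟨C₂, hC₂⟩ : ∃ C, ∀ y ∈ closedBall (0:E) (‖x₀‖ + 1), ‖fderiv ℝ ω y‖ ≤ C :=
    (isCompact_closedBall (0:E) (‖x₀‖ + 1)).exists_bound_of_continuousOn (f := fderiv ℝ ω)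
      hfc.continuousOn
  have key : HasFDerivAt (fun x : E => ∫ t in (0:ℝ)..1, ω (t • x) x)
      (∫ t in (0:ℝ)..1, F' x₀ t) x₀ := by
    apply intervalIntegral.hasFDerivAt_integral_of_dominated_of_fderiv_le
      (F := fun x t => ω (t • x) x) (bound := fun _ => C₁ + C₂ * (‖x₀‖ + 1)) (ball_mem_nhds x₀ zero_lt_one)
    · filter_upwards with x
      exact ((hω.continuous.comp (by fun_prop)).clm_apply continuous_const).aestronglyMeasurable
    · exact ((hω.continuous.comp (by fun_prop)).clm_apply
        continuous_const).intervalIntegrable _ _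
    · apply Continuous.aestronglyMeasurable
      apply Continuous.add (hω.continuous.comp (by fun_prop))
      apply Continuous.smul continuous_id
      exact ((ContinuousLinearMap.flipₗᵢ ℝ E E ℝ).continuous.comp
        (hfc.comp (by fun_prop))).clm_apply continuous_const
    · filter_upwards with t ht x hx
      have hmem : t • x ∈ closedBall (0:E) (‖x₀‖ + 1) := by
        rw [Set.mem_uIoc] at ht
        have ht1 : |t| ≤ 1 := by rcases ht with ⟨h1, h2⟩ | ⟨h1, h2⟩ <;> rw [abs_le] <;>
          constructor <;> linarith
        have hxn : ‖x‖ ≤ ‖x₀‖ + 1 := by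
          have h1 := mem_ball_iff_norm.mp hx
          have h2 := norm_sub_norm_le x x₀
          linarith
        simp only [mem_closedBall, dist_zero_right, norm_smul, Real.norm_eq_abs]
        calc |t| * ‖x‖ ≤ 1 * (‖x₀‖ + 1) := by
              apply mul_le_mul ht1 hxn (norm_nonneg _) zero_le_one
        _ = ‖x₀‖ + 1 := one_mul _
      have ht1 : |t| ≤ 1 := by
        rw [Set.mem_uIoc] at ht
        rcases ht with ⟨h1, h2⟩ | ⟨h1, h2⟩ <;> rw [abs_le] <;> constructor <;> linarith
      have hxn : ‖x‖ ≤ ‖x₀‖ + 1 := by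
        have h1 := mem_ball_iff_norm.mp hx
        have h2 := norm_sub_norm_le x x₀
        linarith
      calc ‖F' x t‖ ≤ ‖ω (t • x)‖ + ‖t • ((fderiv ℝ ω (t • x)).flip x)‖ := norm_add_le _ _
      _ ≤ C₁ + C₂ * (‖x₀‖ + 1) := by
          apply add_le_add (hC₁ _ hmem)
          rw [norm_smul, Real.norm_eq_abs]
          calc |t| * ‖(fderiv ℝ ω (t • x)).flip x‖ ≤ 1 * (‖fderiv ℝ ω (t • x)‖ * ‖x‖) := by
                apply mul_le_mul ht1 _ (norm_nonneg _) zero_le_one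
                calc ‖(fderiv ℝ ω (t • x)).flip x‖ ≤ ‖(fderiv ℝ ω (t • x)).flip‖ * ‖x‖ :=
                      le_opNorm _ _
                _ = ‖fderiv ℝ ω (t • x)‖ * ‖x‖ := by rw [ContinuousLinearMap.opNorm_flip]
          _ ≤ C₂ * (‖x₀‖ + 1) := by
                rw [one_mul]
                apply mul_le_mul (hC₂ _ hmem) hxn (norm_nonneg _)
                exact le_trans (norm_nonneg (fderiv ℝ ω (t • x))) (hC₂ _ hmem)
    · exact intervalIntegrable_const
    · filter_upwards with t ht x hx; exact h_diff t x
  -- identify the derivative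
  have heq : (∫ t in (0:ℝ)..1, F' x₀ t) = ω x₀ := by
    have hF'cont : Continuous (F' x₀) := by
      apply Continuous.add (hω.continuous.comp (by fun_prop))
      apply Continuous.smul continuous_id
      exact ((ContinuousLinearMap.flipₗᵢ ℝ E E ℝ).continuous.comp
        (hfc.comp (by fun_prop))).clm_apply continuous_const
    ext v
    rw [ContinuousLinearMap.intervalIntegral_apply (hF'cont.intervalIntegrable _ _)]
    have hint : ∀ t ∈ Set.uIcc (0:ℝ) 1,
        HasDerivAt (fun t : ℝ => t * (ω (t • x₀) v)) (F' x₀ t v) t := by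
      intro t _
      have hsm : HasDerivAt (fun t : ℝ => t • x₀) x₀ t := by
        simpa using (hasDerivAt_id t).smul_const x₀
      have hc : HasDerivAt (fun t : ℝ => ω (t • x₀)) ((fderiv ℝ ω (t • x₀)) x₀) t :=
        ((hωd (t • x₀)).hasFDerivAt).comp_hasDerivAt t hsm
      have happ : HasDerivAt (fun t : ℝ => ω (t • x₀) v) (((fderiv ℝ ω (t • x₀)) x₀) v) t := by
        simpa using hc.clm_apply (hasDerivAt_const t v)
      have := (hasDerivAt_id t).mul happ
      refine this.congr_deriv ?_
      simp [hF', ContinuousLinearMap.flip_apply, hclosed (t • x₀) v x₀]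
    have hcont2 : Continuous fun t => F' x₀ t v := hF'cont.clm_apply continuous_const
    rw [integral_eq_sub_of_hasDerivAt hint (hcont2.intervalIntegrable _ _)]
    simp
  rwa [heq] at key

private theorem ftc_part (ω : E → (E →L[ℝ] ℝ)) (hω : ContDiff ℝ 1 ω)
    (f : E → ℝ) (hf : ∀ x, HasFDerivAt f (ω x) x)
    (γ : ℝ → E) (hγ : ContDiff ℝ 1 γ) :
    ∫ t in (0:ℝ)..1, ω (γ t) (deriv γ t) = f (γ 1) - f (γ 0) := by
  have hder : ∀ t ∈ Set.uIcc (0:ℝ) 1, HasDerivAt (f ∘ γ) (ω (γ t) (deriv γ t)) t := by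
    intro t _
    exact (hf (γ t)).comp_hasDerivAt t ((hγ.differentiable one_ne_zero t).hasDerivAt)
  have hcont : Continuous fun t => ω (γ t) (deriv γ t) :=
    (hω.continuous.comp hγ.continuous).clm_apply (hγ.continuous_deriv le_rfl)
  exact integral_eq_sub_of_hasDerivAt hder (hcont.intervalIntegrable _ _)

/-- The integral of a closed `C¹` one-form along a `C¹` path depends only on the
endpoints of the path.  This is the fact used to define the Ismagilov–Losik–Michor
cocycle: the integral of the closed one-form `g^*λ − λ` depends only on the endpoints. -/
theorem closed_oneForm_integral_depends_only_on_endpoints {m : ℕ}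
    (ω : EuclideanSpace ℝ (Fin m) → (EuclideanSpace ℝ (Fin m) →L[ℝ] ℝ))
    (hω : ContDiff ℝ 1 ω)
    (hclosed : ∀ y u v : EuclideanSpace ℝ (Fin m),
      ((fderiv ℝ ω y) u) v = ((fderiv ℝ ω y) v) u)
    (γ₀ γ₁ : ℝ → EuclideanSpace ℝ (Fin m))
    (hγ₀ : ContDiff ℝ 1 γ₀) (hγ₁ : ContDiff ℝ 1 γ₁)
    (h₀ : γ₀ 0 = γ₁ 0) (h₁ : γ₀ 1 = γ₁ 1) :
    ∫ t in (0:ℝ)..1, ω (γ₀ t) (deriv γ₀ t) = ∫ t in (0:ℝ)..1, ω (γ₁ t) (deriv γ₁ t) := by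
  set f : EuclideanSpace ℝ (Fin m) → ℝ := fun x => ∫ t in (0:ℝ)..1, ω (t • x) x with hf
  have hpot : ∀ x, HasFDerivAt f (ω x) x := poincare ω hω hclosed
  rw [ftc_part ω hω f hpot γ₀ hγ₀, ftc_part ω hω f hpot γ₁ hγ₁, h₀, h₁]
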